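/- Let i < k and let μ be a partition with μ_k > i ≥ μ_{k+1}. Then s_μ = Σ_{m=1}^{k} (−1)^{k−m} h_{μ_m + k − i − m} s_{μ^{(m)}}, where μ^{(m)} = (μ_1,…,μ_{m−1}, μ_{m+1}−1,…,μ_k−1, i, μ_{k+1},…,μ_ℓ) and ℓ = ℓ(μ). -/

import Mathlib

/-- The complete homogeneous symmetric polynomial in `n` variables over `ℤ`, indexed by an
integer, with the convention `h_r = 0` for `r < 0`. -/
noncomputable def hInt (n : ℕ) (r : ℤ) : MvPolynomial (Fin n) ℤ :=
  if r < 0 then 0 else MvPolynomial.hsymm (Fin n) ℤ r.toNat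

/-- Schur polynomial in `n` variables of a partition given as a list, via Jacobi–Trudi. -/
noncomputable def schur (n : ℕ) (l : List ℕ) : MvPolynomial (Fin n) ℤ :=
  Matrix.det (Matrix.of fun i j : Fin l.length =>
    hInt n ((l.get i : ℤ) + (j : ℤ) - (i : ℤ)))

/-- `l` is (the list of parts of) a partition: weakly decreasing with positive parts. -/
def IsPartitionList (l : List ℕ) : Prop := l.Pairwise (· ≥ ·) ∧ ∀ x ∈ l, 0 < x

/-- `μ^{(m)}` (1-based `m`): delete the entry `μ_m`, subtract `1` from `μ_{m+1},…,μ_k`,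
and insert `i` between positions `k−1` and `k`. -/
def muDel (μ : List ℕ) (i k m : ℕ) : List ℕ :=
  μ.take (m - 1) ++ ((μ.drop m).take (k - m)).map (· - 1) ++ [i] ++ μ.drop k

lemma cycleRange_val {N : ℕ} (i j : Fin N) :
    ((Fin.cycleRange i j : Fin N) : ℕ) =
      if (j : ℕ) < i then (j : ℕ) + 1 else if (j : ℕ) = (i : ℕ) then 0 else (j : ℕ) := by
  match N with
  | 0 => exact j.elim0
  | N+1 =>
    rcases lt_trichotomy j i with h | h | h
    · rw [Fin.coe_cycleRange_of_lt h, if_pos (by exact_mod_cast h)]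
    · subst h; simp [Fin.cycleRange_self]
    · have h' : (i : ℕ) < (j : ℕ) := h
      rw [Fin.cycleRange_of_gt h, if_neg (by omega), if_neg (by omega)]

lemma val_succAbove {N : ℕ} (q : Fin (N + 1)) (x : Fin N) :
    ((q.succAbove x : Fin (N + 1)) : ℕ) = if (x : ℕ) < q then (x : ℕ) else (x : ℕ) + 1 := by
  rcases lt_or_ge (Fin.castSucc x) q with h | h
  · have h' : (x : ℕ) < (q : ℕ) := h
    rw [Fin.succAbove_of_castSucc_lt _ _ h, if_pos h', Fin.coe_castSucc]
  · have h' : (q : ℕ) ≤ (x : ℕ) := h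
    rw [Fin.succAbove_of_le_castSucc _ _ h, if_neg (by omega), Fin.val_succ]

lemma muDel_length (μ : List ℕ) (i k m : ℕ) (h1 : 1 ≤ m) (hmk : m ≤ k) (hk : k ≤ μ.length) :
    (muDel μ i k m).length = μ.length := by
  simp only [muDel, List.length_append, List.length_take, List.length_map, List.length_drop,
    List.length_cons, List.length_nil]
  omega

lemma muDel_getD (μ : List ℕ) (i k m b : ℕ) (h1 : 1 ≤ m) (hmk : m ≤ k) (hk : k ≤ μ.length) :
    (muDel μ i k m).getD b 0 =
      if b < m - 1 then μ.getD b 0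
      else if b < k - 1 then μ.getD (b + 1) 0 - 1
      else if b = k - 1 then i
      else μ.getD b 0 := by
  have l1 : (μ.take (m-1)).length = m - 1 := by simp; omega
  have l2 : (((μ.drop m).take (k - m)).map (· - 1)).length = k - m := by simp; omega
  simp only [muDel, List.getD_eq_getElem?_getD]
  rcases lt_or_ge b (m-1) with hb | hb
  · rw [List.getElem?_append_left (by simp [l1, l2]; omega),
      List.getElem?_append_left (by simp [l1, l2]; omega),
      List.getElem?_append_left (by omega),
      List.getElem?_take_of_lt (by omega)]
    rw [if_pos hb]
  · rcases lt_or_ge b (k-1) with hb2 | hb2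
    · rw [List.getElem?_append_left (by simp [l1, l2]; omega),
        List.getElem?_append_left (by simp [l1, l2]; omega),
        List.getElem?_append_right (by omega), l1,
        List.getElem?_map, List.getElem?_take_of_lt (by omega), List.getElem?_drop]
      rw [if_neg (by omega), if_pos hb2]
      have : m + (b - (m-1)) = b + 1 := by omega
      rw [this]
      rcases h : μ[b+1]? with _ | x
      · simp
      · simp
    · rcases eq_or_lt_of_le hb2 with hb3 | hb3
      · rw [List.getElem?_append_left (by simp [l1, l2]; omega),
          List.getElem?_append_right (by simp [l1, l2]; omega)]
        simp only [List.length_append, l1, l2]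
        have : b - (m - 1 + (k - m)) = 0 := by omega
        rw [this]
        rw [if_neg (by omega), if_neg (by omega), if_pos (by omega)]
        rfl
      · rw [List.getElem?_append_right (by simp [l1, l2]; omega)]
        simp only [List.length_append, l1, l2, List.length_cons, List.length_nil]
        rw [List.getElem?_drop]
        have : k + (b - (m - 1 + (k - m) + (0 + 1))) = b := by omega
        rw [this]
        rw [if_neg (by omega), if_neg (by omega), if_neg (by omega)]

lemma get_eq_getD (l : List ℕ) (b : Fin l.length) : l.get b = l.getD (b : ℕ) 0 := by
  rw [List.getD_eq_getElem?_getD, List.getElem?_eq_getElem b.isLt, List.get_eq_getElem]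
  rfl

lemma hInt_congr (n : ℕ) {x y : ℤ} (h : x = y) : hInt n x = hInt n y := by rw [h]

lemma hInt_neg (n : ℕ) {x : ℤ} (h : x < 0) : hInt n x = 0 := if_pos h

theorem schur_column_expansion (n i k : ℕ) (μ : List ℕ) (hμ : IsPartitionList μ)
    (hik : i < k) (hcol : i < μ.getD (k - 1) 0) (hcol' : μ.getD k 0 ≤ i) :
    schur n μ = ∑ m ∈ Finset.Icc 1 k,
      (-1 : MvPolynomial (Fin n) ℤ) ^ (k - m) *
        hInt n ((μ.getD (m - 1) 0 : ℤ) + (k : ℤ) - (i : ℤ) - (m : ℤ)) *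
        schur n (muDel μ i k m) := by
  obtain ⟨hsort, hposl⟩ := hμ
  have hk1 : 1 ≤ k := by omega
  have hkL : k ≤ μ.length := by
    by_contra h
    rw [List.getD_eq_default _ _ (by omega)] at hcol
    omega
  set L := μ.length with hL
  -- monotonicity in getD form
  have hmono : ∀ p q : ℕ, p ≤ q → μ.getD q 0 ≤ μ.getD p 0 := by
    intro p q hpq
    rcases lt_or_ge q L with hq | hq
    · rcases eq_or_lt_of_le hpq with rfl | h
      · exact le_refl _
      · have := List.Pairwise.rel_get_of_lt hsort
          (a := ⟨p, by omega⟩) (b := ⟨q, hq⟩) (show (⟨p, by omega⟩ : Fin L) < ⟨q, hq⟩ from h)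
        rw [get_eq_getD, get_eq_getD] at this
        exact this
    · rw [List.getD_eq_default _ _ (by omega)]
      exact Nat.zero_le _
  have hile : ∀ b : ℕ, k ≤ b → μ.getD b 0 ≤ i := fun b hb => (hmono k b hb).trans hcol'
  have hposD : ∀ b : ℕ, b < L → 1 ≤ μ.getD b 0 := by
    intro b hb
    rw [List.getD_eq_getElem?_getD, List.getElem?_eq_getElem hb]
    exact hposl _ (List.getElem_mem _)
  -- the augmented matrix
  set r : ℕ → ℤ := fun t => if t < L then (μ.getD t 0 : ℤ) - (t : ℤ) else (i : ℤ) - (k : ℤ) + 1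
    with hr
  set c : ℕ → ℤ := fun t => if t < L then (t : ℤ) else (k : ℤ) - 1 - (i : ℤ) with hc
  set M : Matrix (Fin (L+1)) (Fin (L+1)) (MvPolynomial (Fin n) ℤ) :=
    Matrix.of (fun p q : Fin (L+1) => hInt n (r (p : ℕ) + c (q : ℕ))) with hM
  have hdet0 : M.det = 0 := by
    apply Matrix.det_zero_of_column_eq (i := (⟨k - 1 - i, by omega⟩ : Fin (L+1)))
      (j := Fin.last L)
    · intro h
      have := congrArg Fin.val h
      simp only [Fin.val_last] at this
      omega
    · intro a
      rw [hM]
      simp only [Matrix.of_apply]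
      apply hInt_congr
      rw [hc]
      simp only
      rw [if_pos (show k - 1 - i < L by omega), if_neg (by simp [Fin.val_last])]
      omega
  have hexp := Matrix.det_succ_column M (Fin.last L)
  rw [hdet0, Fin.sum_univ_castSucc] at hexp
  -- the last term is schur μ
  have hlast : (-1 : MvPolynomial (Fin n) ℤ) ^ ((Fin.last L : ℕ) + (Fin.last L : ℕ)) *
      M (Fin.last L) (Fin.last L) *
      (M.submatrix (Fin.last L).succAbove (Fin.last L).succAbove).det = schur n μ := by
    have h1 : M (Fin.last L) (Fin.last L) = 1 := by
      rw [hM]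
      simp only [Matrix.of_apply, Fin.val_last, hr, hc]
      rw [if_neg (lt_irrefl L), if_neg (lt_irrefl L)]
      rw [hInt_congr n (show (i : ℤ) - k + 1 + ((k : ℤ) - 1 - i) = 0 by ring)]
      simp [hInt]
    have h2 : (M.submatrix (Fin.last L).succAbove (Fin.last L).succAbove)
        = Matrix.of (fun a b : Fin μ.length => hInt n ((μ.get a : ℤ) + (b : ℤ) - (a : ℤ))) := by
      refine Matrix.ext fun a b => ?_
      simp only [Matrix.submatrix_apply, Fin.succAbove_last, Matrix.of_apply, hM,
        Fin.coe_castSucc]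
      rw [hr, hc]
      simp only
      rw [if_pos a.isLt, if_pos b.isLt]
      rw [get_eq_getD]
      apply hInt_congr
      ring
    rw [h1, h2, mul_one]
    rw [Even.neg_one_pow ⟨(Fin.last L : ℕ), rfl⟩, one_mul]
    rfl
  -- the minor for a < k equals (-1)^(L-k) * schur of muDel
  have hterm : ∀ a : Fin L, (a : ℕ) < k →
      (M.submatrix (Fin.castSucc a).succAbove (Fin.last L).succAbove).det
        = (-1 : MvPolynomial (Fin n) ℤ) ^ (L - k) * schur n (muDel μ i k ((a : ℕ) + 1)) := by
    intro a ha
    have hνlen : (muDel μ i k ((a : ℕ) + 1)).length = L :=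
      muDel_length μ i k _ (by omega) (by omega) hkL
    set ν := muDel μ i k ((a : ℕ) + 1) with hν
    set pf : Fin L := ⟨L - k, by omega⟩ with hpf
    set τ : Equiv.Perm (Fin L) := Fin.revPerm * Fin.cycleRange pf * Fin.revPerm with hτ
    have hτval : ∀ b : Fin L, ((τ b : Fin L) : ℕ) =
        if (b : ℕ) < k - 1 then (b : ℕ) else if (b : ℕ) = k - 1 then L - 1
          else (b : ℕ) - 1 := by
      intro b
      have hb := b.isLt
      have hpfv : (pf : ℕ) = L - k := rfl
      simp only [hτ, Equiv.Perm.mul_apply, Fin.revPerm_apply]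
      rw [Fin.val_rev, cycleRange_val, Fin.val_rev, hpfv]
      split_ifs <;> omega
    have hsign : Equiv.Perm.sign τ = (-1 : ℤˣ) ^ (L - k) := by
      rw [hτ, Equiv.Perm.sign_mul, Equiv.Perm.sign_mul, Fin.sign_cycleRange]
      have hpfv : (pf : ℕ) = L - k := rfl
      rw [hpfv, mul_comm (Equiv.Perm.sign Fin.revPerm), mul_assoc, Int.units_mul_self,
        mul_one]
    -- the Jacobi-Trudi matrix of ν as an L × L matrix
    set T : Matrix (Fin L) (Fin L) (MvPolynomial (Fin n) ℤ) :=
      Matrix.of (fun b j : Fin L => hInt n ((ν.getD (b : ℕ) 0 : ℤ) + (j : ℕ) - (b : ℕ)))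
      with hT
    have hschur : schur n ν = T.det := by
      rw [schur, ← Matrix.det_submatrix_equiv_self (finCongr hνlen) T]
      congr 1
      refine Matrix.ext fun b j => ?_
      simp only [Matrix.of_apply, Matrix.submatrix_apply, hT, finCongr_apply, Fin.coe_cast]
      rw [get_eq_getD]
    have hTeq : T = (M.submatrix (Fin.castSucc a).succAbove
        (Fin.last L).succAbove).submatrix τ id := by
      refine Matrix.ext fun b j => ?_
      have hb := b.isLt
      have hj := j.isLt
      have hgd := muDel_getD μ i k ((a : ℕ) + 1) (b : ℕ) (by omega) (by omega) hkL
      have hτb := hτval b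
      simp only [hT, Matrix.of_apply, Matrix.submatrix_apply, id_eq, Fin.succAbove_last,
        hM, Fin.coe_castSucc]
      rw [← hν] at hgd
      rcases Nat.lt_or_ge (b : ℕ) (a : ℕ) with hA | hA
      · rw [if_pos (show (b : ℕ) < (a : ℕ) + 1 - 1 by omega)] at hgd
        rw [if_pos (show (b : ℕ) < k - 1 by omega)] at hτb
        rw [hgd, val_succAbove, hτb, Fin.coe_castSucc, if_pos (show (b : ℕ) < (a : ℕ) by omega)]
        simp only [hr, hc]
        rw [if_pos (show (b : ℕ) < L by omega), if_pos hj]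
        apply hInt_congr; ring
      · rcases Nat.lt_or_ge (b : ℕ) (k - 1) with hB | hB
        · rw [if_neg (by omega), if_pos hB] at hgd
          rw [if_pos hB] at hτb
          rw [hgd, val_succAbove, hτb, Fin.coe_castSucc, if_neg (show ¬ (b : ℕ) < (a : ℕ) by omega)]
          simp only [hr, hc]
          rw [if_pos (show (b : ℕ) + 1 < L by omega), if_pos hj]
          have hp := hposD ((b : ℕ) + 1) (by omega)
          apply hInt_congr; omega
        · rcases Nat.eq_or_lt_of_le hB with hC | hC
          · rw [if_neg (by omega), if_neg (by omega), if_pos (by omega)] at hgd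
            rw [if_neg (by omega), if_pos (by omega)] at hτb
            rw [hgd, val_succAbove, hτb, Fin.coe_castSucc, if_neg (show ¬ L - 1 < (a : ℕ) by omega)]
            simp only [hr, hc]
            rw [if_neg (show ¬ L - 1 + 1 < L by omega), if_pos hj]
            apply hInt_congr; omega
          · rw [if_neg (by omega), if_neg (by omega), if_neg (by omega)] at hgd
            rw [if_neg (by omega), if_neg (by omega)] at hτb
            rw [hgd, val_succAbove, hτb, Fin.coe_castSucc, if_neg (show ¬ (b : ℕ) - 1 < (a : ℕ) by omega),
              (show (b : ℕ) - 1 + 1 = (b : ℕ) by omega)]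
            simp only [hr, hc]
            rw [if_pos (show (b : ℕ) < L by omega), if_pos hj]
            apply hInt_congr; ring
    have hperm := Matrix.det_permute τ
      (M.submatrix (Fin.castSucc a).succAbove (Fin.last L).succAbove)
    rw [← hTeq, hsign] at hperm
    have hcast : (((-1 : ℤˣ) ^ (L - k) : ℤˣ) : ℤ) = (-1 : ℤ) ^ (L - k) := by
      push_cast; ring
    rw [hschur, hperm]
    rw [hcast]
    push_cast
    rw [← mul_assoc, ← pow_add]
    rw [Even.neg_one_pow ⟨L - k, by ring⟩, one_mul]
  rw [hlast] at hexp
  set g : ℕ → MvPolynomial (Fin n) ℤ := fun t =>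
    if t < k then
      -((-1 : MvPolynomial (Fin n) ℤ) ^ (k - (t + 1)) *
        hInt n ((μ.getD t 0 : ℤ) + (k : ℤ) - (i : ℤ) - ((t : ℤ) + 1)) *
        schur n (muDel μ i k (t + 1)))
    else 0 with hg
  have hsummand : ∀ a : Fin L,
      (-1 : MvPolynomial (Fin n) ℤ) ^ ((Fin.castSucc a : ℕ) + (Fin.last L : ℕ)) *
        M (Fin.castSucc a) (Fin.last L) *
        (M.submatrix (Fin.castSucc a).succAbove (Fin.last L).succAbove).det = g (a : ℕ) := by
    intro a
    simp only [Fin.coe_castSucc, Fin.val_last]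
    rcases Nat.lt_or_ge (a : ℕ) k with hak | hak
    · rw [hterm a hak, hg]
      simp only
      rw [if_pos hak]
      have hMa : M (Fin.castSucc a) (Fin.last L)
          = hInt n ((μ.getD (a : ℕ) 0 : ℤ) + (k : ℤ) - (i : ℤ) - ((a : ℤ) + 1)) := by
        rw [hM]
        simp only [Matrix.of_apply, Fin.coe_castSucc, Fin.val_last, hr, hc]
        rw [if_pos a.isLt, if_neg (lt_irrefl L)]
        apply hInt_congr; ring
      rw [hMa]
      have hs : (-1 : MvPolynomial (Fin n) ℤ) ^ ((a : ℕ) + L) *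
          (-1 : MvPolynomial (Fin n) ℤ) ^ (L - k)
          = -(-1 : MvPolynomial (Fin n) ℤ) ^ (k - ((a : ℕ) + 1)) := by
        have hodd : (-1 : MvPolynomial (Fin n) ℤ) ^ (2 * ((a : ℕ) + L - k) + 1) = -1 :=
          Odd.neg_one_pow ⟨(a : ℕ) + L - k, by ring⟩
        rw [← pow_add,
          show (a : ℕ) + L + (L - k) = (k - ((a : ℕ) + 1)) + (2 * ((a : ℕ) + L - k) + 1)
            from by omega,
          pow_add, hodd, mul_neg_one]
      linear_combination (hInt n ((μ.getD (a : ℕ) 0 : ℤ) + (k : ℤ) - (i : ℤ) - ((a : ℤ) + 1)) *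
        schur n (muDel μ i k ((a : ℕ) + 1))) * hs
    · rw [hg]
      simp only
      rw [if_neg (by omega)]
      have hMa : M (Fin.castSucc a) (Fin.last L) = 0 := by
        rw [hM]
        simp only [Matrix.of_apply, Fin.coe_castSucc, Fin.val_last, hr, hc]
        rw [if_pos a.isLt, if_neg (lt_irrefl L)]
        apply hInt_neg
        have h1 := hile (a : ℕ) hak
        have h2 := a.isLt
        omega
      rw [hMa]
      ring
  have hS : (∑ a : Fin L, (-1 : MvPolynomial (Fin n) ℤ) ^
        ((Fin.castSucc a : ℕ) + (Fin.last L : ℕ)) * M (Fin.castSucc a) (Fin.last L) *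
        (M.submatrix (Fin.castSucc a).succAbove (Fin.last L).succAbove).det)
      = ∑ t ∈ Finset.range L, g t := by
    rw [← Fin.sum_univ_eq_sum_range g L]
    exact Finset.sum_congr rfl fun a _ => hsummand a
  rw [hS] at hexp
  have hS2 : ∑ t ∈ Finset.range k, g t = ∑ t ∈ Finset.range L, g t := by
    apply Finset.sum_subset (Finset.range_subset_range.2 hkL)
    intro x _ hx
    simp only [hg]
    rw [if_neg (by simpa using hx)]
  have hIcc : (∑ m ∈ Finset.Icc 1 k,
      (-1 : MvPolynomial (Fin n) ℤ) ^ (k - m) *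
        hInt n ((μ.getD (m - 1) 0 : ℤ) + (k : ℤ) - (i : ℤ) - (m : ℤ)) *
        schur n (muDel μ i k m)) = ∑ t ∈ Finset.range k, -(g t) := by
    rw [← Finset.Ico_add_one_right_eq_Icc, Finset.sum_Ico_eq_sum_range]
    have hkk : k + 1 - 1 = k := by omega
    rw [hkk]
    refine Finset.sum_congr rfl fun t ht => ?_
    have htk : t < k := by simpa using ht
    simp only [hg]
    rw [if_pos htk, neg_neg]
    rw [show 1 + t = t + 1 from Nat.add_comm 1 t, Nat.add_sub_cancel, Nat.cast_add,
      Nat.cast_one]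
  rw [hIcc, Finset.sum_neg_distrib, hS2]
  linear_combination -hexp
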